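/- Let x ∈ S^{d-1}, t ∈ (0,1], and suppose f: S^{d-1} → R is bounded and satisfies |f(y) − f(x)| ≤ M d(x,y)^t for all y with d(x,y) ≤ δ. Let A_j(x,y) be a kernel with ∫_{S^{d-1}} A_j(x,y) dy = 1 and |A_j(x,y)| ≤ c_m 2^{j(d-1)}/(1 + 2^j d(x,y))^m for every m (with constants c_m). Then there exists C depending on M, δ, d, t, ‖f‖_∞ and the constants c_m such that |∫ A_j(x,y) f(y) dy − f(x)| ≤ C 2^{-jt} for all j. -/

import Mathlib

open MeasureTheory Metric

/-- The surface measure on the unit sphere `S^{d-1} ⊂ ℝ^d` (total mass `ω_{d-1}`). -/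
noncomputable def sphereMeasure (d : ℕ) :
    Measure (sphere (0 : EuclideanSpace ℝ (Fin d)) 1) :=
  (volume : Measure (EuclideanSpace ℝ (Fin d))).toSphere

/-- The geodesic distance `d(x,y) = arccos (x ⬝ y)` on the unit sphere. -/
noncomputable def geodesicDist {d : ℕ} (x y : sphere (0 : EuclideanSpace ℝ (Fin d)) 1) : ℝ :=
  Real.arccos (inner (𝕜 := ℝ) (x : EuclideanSpace ℝ (Fin d)) (y : EuclideanSpace ℝ (Fin d)))

open Set Pointwise
open scoped ENNReal

lemma geo_nonneg {d : ℕ} (x y : sphere (0 : EuclideanSpace ℝ (Fin d)) 1) :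
    0 ≤ geodesicDist x y := Real.arccos_nonneg _

lemma geo_self {d : ℕ} (x : sphere (0 : EuclideanSpace ℝ (Fin d)) 1) :
    geodesicDist x x = 0 := by
  have hx : ‖(x : EuclideanSpace ℝ (Fin d))‖ = 1 := mem_sphere_zero_iff_norm.mp x.2
  have : inner (𝕜 := ℝ) (x : EuclideanSpace ℝ (Fin d)) (x : EuclideanSpace ℝ (Fin d)) = 1 := by
    rw [real_inner_self_eq_norm_sq, hx]; norm_num
  rw [geodesicDist, this, Real.arccos_one]

lemma geo_continuous {d : ℕ} (x : sphere (0 : EuclideanSpace ℝ (Fin d)) 1) :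
    Continuous (fun y => geodesicDist x y) :=
  Real.continuous_arccos.comp (Continuous.inner continuous_const continuous_subtype_val)

lemma chord_le_geo {d : ℕ} (x y : sphere (0 : EuclideanSpace ℝ (Fin d)) 1) :
    ‖(y : EuclideanSpace ℝ (Fin d)) - (x : EuclideanSpace ℝ (Fin d))‖ ≤ geodesicDist x y := by
  set X := (x : EuclideanSpace ℝ (Fin d))
  set Y := (y : EuclideanSpace ℝ (Fin d))
  have hX : ‖X‖ = 1 := mem_sphere_zero_iff_norm.mp x.2
  have hY : ‖Y‖ = 1 := mem_sphere_zero_iff_norm.mp y.2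
  set ip := inner (𝕜 := ℝ) X Y with hip
  have hab : |ip| ≤ 1 := by
    have := abs_real_inner_le_norm X Y
    rwa [hX, hY, one_mul] at this
  have h1 : -1 ≤ ip := (abs_le.mp hab).1
  have h2 : ip ≤ 1 := (abs_le.mp hab).2
  have hcos : Real.cos (geodesicDist x y) = ip := Real.cos_arccos h1 h2
  have hθ : 0 ≤ geodesicDist x y := Real.arccos_nonneg _
  have hn2 : ‖Y - X‖ ^ 2 = 2 - 2 * ip := by
    rw [norm_sub_sq_real, hX, hY, real_inner_comm]
    ring
  have hle : ‖Y - X‖ ^ 2 ≤ (geodesicDist x y) ^ 2 := by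
    rw [hn2]
    have := Real.one_sub_sq_div_two_le_cos (x := geodesicDist x y)
    rw [hcos] at this
    nlinarith
  calc ‖Y - X‖ = √(‖Y - X‖ ^ 2) := by rw [Real.sqrt_sq (norm_nonneg _)]
    _ ≤ √((geodesicDist x y) ^ 2) := Real.sqrt_le_sqrt hle
    _ = geodesicDist x y := Real.sqrt_sq hθ

lemma cap_bound (d : ℕ) (hd : 2 ≤ d) (x : sphere (0 : EuclideanSpace ℝ (Fin d)) 1) :
    ∃ κ : ℝ, 0 ≤ κ ∧ ∀ r : ℝ, 0 < r →
      sphereMeasure d {y | geodesicDist x y ≤ r} ≤ ENNReal.ofReal (κ * r ^ (d - 1)) := by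
  set E := EuclideanSpace ℝ (Fin d)
  set V : ℝ≥0∞ := volume (ball (0 : E) 1) with hV
  have hVlt : V ≠ ⊤ := measure_ball_lt_top.ne
  set Vr : ℝ := V.toReal with hVr
  have hVr0 : 0 ≤ Vr := ENNReal.toReal_nonneg
  have hVeq : V = ENNReal.ofReal Vr := (ENNReal.ofReal_toReal hVlt).symm
  have hfr : Module.finrank ℝ E = d := finrank_euclideanSpace_fin
  refine ⟨d * 2^(d+1) * Vr + d * Vr, by positivity, fun r hr => ?_⟩
  set X := (x : E)
  have hXn : ‖X‖ = 1 := mem_sphere_zero_iff_norm.mp x.2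
  set s' : Set (sphere (0:E) 1) := {y | ‖(y : E) - X‖ ≤ r} with hs'
  have hsub : {y | geodesicDist x y ≤ r} ⊆ s' := fun y hy =>
    le_trans (chord_le_geo x y) hy
  have hs'm : MeasurableSet s' := by
    have : IsClosed s' := isClosed_le (by fun_prop) continuous_const
    exact this.measurableSet
  have hmono := measure_mono (μ := sphereMeasure d) hsub
  refine le_trans hmono ?_
  rw [show sphereMeasure d = (volume : Measure E).toSphere from rfl,
    Measure.toSphere_apply' _ hs'm, hfr]
  rcases le_or_gt r 1 with hr1 | hr1
  · -- covering argument
    set N := Nat.floor (1/r) with hN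
    have hcover : Ioo (0:ℝ) 1 • (Subtype.val '' s') ⊆
        ⋃ k ∈ Finset.range (N+1), closedBall (((k:ℝ)*r) • X) (2*r) := by
      rintro z hz
      rw [Set.mem_smul] at hz
      obtain ⟨a, ha, w, hw, rfl⟩ := hz
      obtain ⟨y, hy, rfl⟩ := hw
      set k := Nat.floor (a/r) with hk
      have ha0 : 0 < a := ha.1
      have ha1 : a < 1 := ha.2
      have hkN : k ≤ N := Nat.floor_le_floor (by gcongr)
      have hkr : (k:ℝ) * r ≤ a := by
        rw [← le_div_iff₀ hr]
        exact Nat.floor_le (by positivity)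
      have hkr2 : a < ((k:ℝ)+1) * r := by
        rw [← div_lt_iff₀ hr]
        exact Nat.lt_floor_add_one _
      refine Set.mem_biUnion (Finset.mem_range.mpr (Nat.lt_succ_of_le hkN)) ?_
      rw [mem_closedBall, dist_eq_norm]
      have hyx : ‖(y:E) - X‖ ≤ r := hy
      calc ‖a • (y:E) - ((k:ℝ)*r) • X‖
          = ‖a • ((y:E) - X) + (a - (k:ℝ)*r) • X‖ := by
            congr 1
            rw [smul_sub, sub_smul]
            abel
        _ ≤ ‖a • ((y:E) - X)‖ + ‖(a - (k:ℝ)*r) • X‖ := norm_add_le _ _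
        _ = a * ‖(y:E) - X‖ + |a - (k:ℝ)*r| * 1 := by
            rw [norm_smul, norm_smul, Real.norm_eq_abs, Real.norm_eq_abs, abs_of_pos ha0, hXn]
        _ ≤ 1 * r + r * 1 := by
            refine add_le_add (mul_le_mul ha1.le hyx (norm_nonneg _) zero_le_one) ?_
            refine mul_le_mul_of_nonneg_right ?_ zero_le_one
            rw [abs_of_nonneg (by linarith)]
            linarith
        _ = 2 * r := by ring
    calc (d : ℝ≥0∞) * volume (Ioo (0:ℝ) 1 • (Subtype.val '' s'))
        ≤ (d : ℝ≥0∞) * ∑ k ∈ Finset.range (N+1), volume (closedBall (((k:ℝ)*r) • X) (2*r)) := by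
          gcongr
          exact (measure_mono hcover).trans (measure_biUnion_finset_le _ _)
      _ = (d : ℝ≥0∞) * ((N+1) * (ENNReal.ofReal ((2*r)^d) * V)) := by
          congr 1
          rw [Finset.sum_congr rfl (fun k _ => Measure.addHaar_closedBall volume _ (by positivity))]
          simp [hfr, Finset.sum_const, mul_assoc, hV]
      _ = ENNReal.ofReal ((d : ℝ) * (((N:ℝ)+1) * ((2*r)^d * Vr))) := by
          rw [hVeq, ← ENNReal.ofReal_mul (by positivity : (0:ℝ) ≤ (2*r)^d),
            show ((d:ℕ) : ℝ≥0∞) = ENNReal.ofReal (d:ℝ) by simp,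
            show (((N:ℕ) : ℝ≥0∞) + 1) = ENNReal.ofReal ((N:ℝ)+1) by rw [ENNReal.ofReal_add (by positivity) zero_le_one, ENNReal.ofReal_one, ENNReal.ofReal_natCast],
            ← ENNReal.ofReal_mul (by positivity), ← ENNReal.ofReal_mul (by positivity)]
      _ ≤ ENNReal.ofReal ((d * 2^(d+1) * Vr + d * Vr) * r ^ (d-1)) := by
          apply ENNReal.ofReal_le_ofReal
          have hN1 : (N:ℝ) + 1 ≤ 2/r := by
            have h1 : (N:ℝ) ≤ 1/r := Nat.floor_le (by positivity)
            have h2 : (1:ℝ) ≤ 1/r := by rw [le_div_iff₀ hr]; linarith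
            have h3 : (2:ℝ)/r = 1/r + 1/r := by ring
            linarith
          have hrd : r^d = r^(d-1) * r := by
            rw [← pow_succ]; congr 1; omega
          have key : (d:ℝ) * ((2/r) * ((2*r)^d * Vr)) = d * 2^(d+1) * Vr * r^(d-1) := by
            rw [mul_pow, hrd]; field_simp; ring
          have hB : (0:ℝ) ≤ (2*r)^d * Vr := by positivity
          have h3 : (d:ℝ) * (((N:ℝ)+1) * ((2*r)^d * Vr)) ≤ d * ((2/r) * ((2*r)^d * Vr)) :=
            mul_le_mul_of_nonneg_left (mul_le_mul_of_nonneg_right hN1 hB) (Nat.cast_nonneg d)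
          rw [key] at h3
          nlinarith [mul_nonneg (mul_nonneg (Nat.cast_nonneg (α := ℝ) d) hVr0)
            (pow_nonneg hr.le (d-1))]
  · -- large r: use total mass
    calc (d : ℝ≥0∞) * volume (Ioo (0:ℝ) 1 • (Subtype.val '' s'))
        ≤ (d : ℝ≥0∞) * V := by
          gcongr
          apply measure_mono
          rintro z hz
          rw [Set.mem_smul] at hz
          obtain ⟨a, ha, w, hw, rfl⟩ := hz
          obtain ⟨y, hy, rfl⟩ := hw
          have hyn : ‖(y:E)‖ = 1 := mem_sphere_zero_iff_norm.mp y.2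
          simp only [mem_ball, dist_zero_right, norm_smul, Real.norm_eq_abs,
            abs_of_pos ha.1, hyn, mul_one]
          exact ha.2
      _ = ENNReal.ofReal ((d:ℝ) * Vr) := by
          rw [hVeq, show ((d:ℕ) : ℝ≥0∞) = ENNReal.ofReal (d:ℝ) by simp,
            ← ENNReal.ofReal_mul (by positivity)]
      _ ≤ ENNReal.ofReal ((d * 2^(d+1) * Vr + d * Vr) * r ^ (d-1)) := by
          apply ENNReal.ofReal_le_ofReal
          have h1 : (1:ℝ) ≤ r ^ (d-1) := one_le_pow₀ hr1.le
          nlinarith [mul_nonneg (mul_nonneg (mul_nonneg (Nat.cast_nonneg (α := ℝ) d)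
            (by positivity : (0:ℝ) ≤ (2:ℝ)^(d+1))) hVr0) (pow_nonneg hr.le (d-1)),
            mul_nonneg (mul_nonneg (Nat.cast_nonneg (α := ℝ) d) hVr0) (pow_nonneg hr.le (d-1))]

lemma lint_bound (d : ℕ) (hd : 2 ≤ d) (x : sphere (0 : EuclideanSpace ℝ (Fin d)) 1) :
    ∃ K : ℝ, 0 ≤ K ∧ ∀ j : ℕ,
      (∫⁻ y, ENNReal.ofReal ((2:ℝ) ^ (j * (d - 1)) / (1 + 2 ^ j * geodesicDist x y) ^ d)
        ∂(sphereMeasure d)) ≤ ENNReal.ofReal K := by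
  classical
  obtain ⟨κ, hκ0, hκ⟩ := cap_bound d hd x
  refine ⟨κ * 2^(d-1) * 2, by positivity, fun j => ?_⟩
  set ρ : sphere (0 : EuclideanSpace ℝ (Fin d)) 1 → ℝ := fun y => geodesicDist x y with hρ
  have hρ0 : ∀ y, 0 ≤ ρ y := fun y => geo_nonneg x y
  set S : ℕ → Set (sphere (0 : EuclideanSpace ℝ (Fin d)) 1) :=
    fun k => {y | ρ y ≤ 2^(k+1) / 2^j} with hS
  have hSm : ∀ k, MeasurableSet (S k) :=
    fun k => (isClosed_le (geo_continuous x) continuous_const).measurableSet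
  set F : ℕ → sphere (0 : EuclideanSpace ℝ (Fin d)) 1 → ℝ≥0∞ :=
    fun k => (S k).indicator (fun _ => ENNReal.ofReal ((2:ℝ)^(j*(d-1)) / 2^(k*d))) with hF
  have hpt : ∀ y, ENNReal.ofReal ((2:ℝ)^(j*(d-1)) / (1 + 2^j * ρ y)^d) ≤ ∑' k, F k y := by
    intro y
    have hex : ∃ k, (2:ℝ)^j * ρ y ≤ 2^(k+1) := by
      obtain ⟨n, hn⟩ := pow_unbounded_of_one_lt ((2:ℝ)^j * ρ y) one_lt_two
      exact ⟨n, hn.le.trans (pow_le_pow_right₀ one_le_two (Nat.le_succ n))⟩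
    set k₀ := Nat.find hex with hk₀
    have hk₀le : (2:ℝ)^j * ρ y ≤ 2^(k₀+1) := Nat.find_spec hex
    have hlow : (2:ℝ)^k₀ ≤ 1 + 2^j * ρ y := by
      rcases Nat.eq_zero_or_pos k₀ with h0 | hpos
      · rw [h0, pow_zero]
        have := mul_nonneg (pow_nonneg (by norm_num : (0:ℝ) ≤ 2) j) (hρ0 y)
        linarith
      · have := Nat.find_min hex (m := k₀ - 1) (by omega)
        push_neg at this
        have h2 : (2:ℝ)^(k₀-1+1) < 2^j * ρ y := this
        have h3 : k₀ - 1 + 1 = k₀ := by omega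
        rw [h3] at h2
        linarith
    have hyS : y ∈ S k₀ := by
      simp only [hS, Set.mem_setOf_eq]
      rw [le_div_iff₀ (by positivity : (0:ℝ) < 2^j)]
      linarith [hk₀le, mul_comm ((2:ℝ)^j) (ρ y)]
    have hg : (2:ℝ)^(j*(d-1)) / (1 + 2^j * ρ y)^d ≤ (2:ℝ)^(j*(d-1)) / 2^(k₀*d) := by
      apply div_le_div_of_nonneg_left (by positivity) (by positivity)
      calc (2:ℝ)^(k₀*d) = ((2:ℝ)^k₀)^d := by rw [← pow_mul]
        _ ≤ (1 + 2^j * ρ y)^d := pow_le_pow_left₀ (by positivity) hlow d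
    calc ENNReal.ofReal ((2:ℝ)^(j*(d-1)) / (1 + 2^j * ρ y)^d)
        ≤ ENNReal.ofReal ((2:ℝ)^(j*(d-1)) / 2^(k₀*d)) := ENNReal.ofReal_le_ofReal hg
      _ ≤ ∑' k, F k y := by
          refine le_trans ?_ (ENNReal.le_tsum k₀)
          exact le_of_eq (by rw [hF]; simp [Set.indicator_of_mem hyS])
  calc (∫⁻ y, ENNReal.ofReal ((2:ℝ)^(j*(d-1)) / (1 + 2^j * geodesicDist x y)^d) ∂(sphereMeasure d))
      ≤ ∫⁻ y, ∑' k, F k y ∂(sphereMeasure d) := lintegral_mono hpt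
    _ = ∑' k, ∫⁻ y, F k y ∂(sphereMeasure d) :=
        lintegral_tsum (fun k => (measurable_const.indicator (hSm k)).aemeasurable)
    _ ≤ ∑' k, ENNReal.ofReal (κ * 2^(d-1) * (1/2)^k) := by
        apply ENNReal.tsum_le_tsum
        intro k
        rw [hF]
        rw [lintegral_indicator_const (hSm k)]
        have hr : (0:ℝ) < 2^(k+1)/2^j := by positivity
        have hmeas : sphereMeasure d (S k) ≤ ENNReal.ofReal (κ * (2^(k+1)/2^j)^(d-1)) := hκ _ hr
        calc ENNReal.ofReal ((2:ℝ)^(j*(d-1)) / 2^(k*d)) * sphereMeasure d (S k)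
            ≤ ENNReal.ofReal ((2:ℝ)^(j*(d-1)) / 2^(k*d)) *
                ENNReal.ofReal (κ * (2^(k+1)/2^j)^(d-1)) := by gcongr
          _ = ENNReal.ofReal ((2:ℝ)^(j*(d-1)) / 2^(k*d) * (κ * (2^(k+1)/2^j)^(d-1))) :=
              (ENNReal.ofReal_mul (by positivity)).symm
          _ = ENNReal.ofReal (κ * 2^(d-1) * (1/2)^k) := by
              congr 1
              obtain ⟨e, rfl⟩ : ∃ e, d = e + 2 := ⟨d - 2, by omega⟩
              have hpow : ∀ (a b : ℕ), ((2:ℝ)^a)^b = 2^(a*b) := fun a b => by rw [← pow_mul]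
              rw [div_pow, hpow, hpow]
              field_simp
              rw [show e + 2 - 1 = e + 1 by omega, show (k+1)*(e+1) = k*(e+1) + (e+1) by ring,
                show k*(e+2) = k*(e+1) + k by ring, pow_add, pow_add, one_div, inv_pow]
              have h2k : (2:ℝ)^k * ((2:ℝ)^k)⁻¹ = 1 := mul_inv_cancel₀ (by positivity)
              linear_combination (-(2:ℝ)^(k*(e+1)) * κ * 2^(e+1)) * h2k
    _ = ENNReal.ofReal (κ * 2^(d-1) * 2) := by
        rw [← ENNReal.ofReal_tsum_of_nonneg (fun k => by positivity)
          (Summable.mul_left _ summable_geometric_two)]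
        congr 1
        rw [tsum_mul_left, tsum_geometric_two]

/-- Local bias bound for localized kernels: if `f` is locally `t`-Hölder at `x`
(`0 < t ≤ 1`), bounded, and `A_j` is a localized kernel with `∫ A_j(x,y) dy = 1` and
`|A_j(x,y)| ≤ c_m 2^{j(d-1)}/(1+2^j d(x,y))^m` for every `m`, then
`|∫ A_j(x,y) f(y) dy − f(x)| ≤ C 2^{-jt}` for all `j`. -/
theorem local_bias_bound (d : ℕ) (hd : 2 ≤ d) (t M δ Mf : ℝ)
    (ht : 0 < t) (ht1 : t ≤ 1) (hδ : 0 < δ)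
    (x : sphere (0 : EuclideanSpace ℝ (Fin d)) 1)
    (f : sphere (0 : EuclideanSpace ℝ (Fin d)) 1 → ℝ)
    (hfm : Measurable f) (hfb : ∀ y, |f y| ≤ Mf)
    (hHolder : ∀ y, geodesicDist x y ≤ δ → |f y - f x| ≤ M * geodesicDist x y ^ t)
    (A : ℕ → sphere (0 : EuclideanSpace ℝ (Fin d)) 1 →
          sphere (0 : EuclideanSpace ℝ (Fin d)) 1 → ℝ)
    (hAm : ∀ j, Measurable (A j x))
    (hA1 : ∀ j, ∫ y, A j x y ∂(sphereMeasure d) = 1)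
    (c : ℕ → ℝ)
    (hloc : ∀ (m j : ℕ) (y : sphere (0 : EuclideanSpace ℝ (Fin d)) 1),
      |A j x y| ≤ c m * (2 : ℝ) ^ (j * (d - 1)) / (1 + 2 ^ j * geodesicDist x y) ^ m) :
    ∃ C, ∀ j : ℕ,
      |(∫ y, A j x y * f y ∂(sphereMeasure d)) - f x| ≤ C * (2 : ℝ) ^ (-(j : ℝ) * t) := by
  haveI : IsFiniteMeasure (sphereMeasure d) :=
    inferInstanceAs (IsFiniteMeasure (volume : Measure (EuclideanSpace ℝ (Fin d))).toSphere)
  obtain ⟨K, hK0, hKb⟩ := lint_bound d hd x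
  have hMf0 : 0 ≤ Mf := le_trans (abs_nonneg _) (hfb x)
  have hδt : (0:ℝ) < δ ^ t := Real.rpow_pos_of_pos hδ t
  have hc : 0 ≤ c (d+1) := by
    have h := hloc (d+1) 0 x
    rw [geo_self] at h
    simp at h
    exact le_trans (abs_nonneg _) h
  set M' : ℝ := |M| + 2*Mf/δ^t with hM'
  have hM'0 : 0 ≤ M' := by positivity
  refine ⟨M' * c (d+1) * K, fun j => ?_⟩
  set μ := sphereMeasure d
  set ρ : sphere (0 : EuclideanSpace ℝ (Fin d)) 1 → ℝ := fun y => geodesicDist x y with hρdef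
  have hρ0 : ∀ y, 0 ≤ ρ y := fun y => geo_nonneg x y
  -- global Hölder estimate
  have hH : ∀ y, |f y - f x| ≤ M' * ρ y ^ t := by
    intro y
    have hrt : (0:ℝ) ≤ ρ y ^ t := Real.rpow_nonneg (hρ0 y) t
    rcases le_or_gt (ρ y) δ with hle | hlt
    · refine le_trans (hHolder y hle) (mul_le_mul_of_nonneg_right ?_ hrt)
      have : (0:ℝ) ≤ 2*Mf/δ^t := by positivity
      calc M ≤ |M| := le_abs_self M
        _ ≤ M' := by rw [hM']; linarith
    · have h2 : |f y - f x| ≤ 2 * Mf := by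
        calc |f y - f x| ≤ |f y| + |f x| := abs_sub _ _
          _ ≤ Mf + Mf := add_le_add (hfb y) (hfb x)
          _ = 2 * Mf := by ring
      have hmono : δ ^ t ≤ ρ y ^ t := Real.rpow_le_rpow hδ.le hlt.le ht.le
      have hq : (2*Mf/δ^t) * δ^t = 2*Mf := div_mul_cancel₀ _ (ne_of_gt hδt)
      have hq0 : (0:ℝ) ≤ 2*Mf/δ^t := by positivity
      calc |f y - f x| ≤ 2*Mf := h2
        _ ≤ M' * ρ y ^ t := by
          rw [hM']
          nlinarith [mul_nonneg (abs_nonneg M) hrt, mul_nonneg hq0 (sub_nonneg.mpr hmono)]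
  -- pointwise kernel bound
  have hpt : ∀ y, |A j x y * (f y - f x)| ≤
      (M' * c (d+1) * (2:ℝ)^(-(j:ℝ)*t)) * ((2:ℝ)^(j*(d-1)) / (1 + 2^j * ρ y)^d) := by
    intro y
    have hu0 : (0:ℝ) ≤ 2^j * ρ y := mul_nonneg (by positivity) (hρ0 y)
    have h1 : (0:ℝ) < 1 + 2^j * ρ y := by linarith
    have hρt : ρ y ^ t ≤ (2:ℝ)^(-(j:ℝ)*t) * (1 + 2^j * ρ y) := by
      have e1 : ρ y = (2:ℝ)^(-(j:ℝ)) * (2^j * ρ y) := by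
        rw [Real.rpow_neg (by norm_num), Real.rpow_natCast]
        field_simp
      calc ρ y ^ t = ((2:ℝ)^(-(j:ℝ)) * (2^j * ρ y)) ^ t := by rw [← e1]
        _ = ((2:ℝ)^(-(j:ℝ)))^t * (2^j * ρ y)^t := Real.mul_rpow (by positivity) hu0
        _ = (2:ℝ)^(-(j:ℝ)*t) * (2^j * ρ y)^t := by
            rw [← Real.rpow_natCast 2 j]
            rw [← Real.rpow_mul (by norm_num)]
        _ ≤ (2:ℝ)^(-(j:ℝ)*t) * (1 + 2^j * ρ y) := by
            apply mul_le_mul_of_nonneg_left _ (by positivity)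
            calc (2^j * ρ y)^t ≤ (1 + 2^j * ρ y)^t :=
                  Real.rpow_le_rpow hu0 (by linarith) ht.le
              _ ≤ (1 + 2^j * ρ y)^(1:ℝ) :=
                  Real.rpow_le_rpow_of_exponent_le (by linarith) ht1
              _ = 1 + 2^j * ρ y := Real.rpow_one _
    have hA := hloc (d+1) j y
    calc |A j x y * (f y - f x)| = |A j x y| * |f y - f x| := abs_mul _ _
      _ ≤ (c (d+1) * 2^(j*(d-1))/(1 + 2^j * ρ y)^(d+1)) *
            (M' * ((2:ℝ)^(-(j:ℝ)*t) * (1 + 2^j * ρ y))) := by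
          apply mul_le_mul hA (le_trans (hH y) (mul_le_mul_of_nonneg_left hρt hM'0))
            (abs_nonneg _) (div_nonneg (mul_nonneg hc (by positivity)) (by positivity))
      _ = (M' * c (d+1) * (2:ℝ)^(-(j:ℝ)*t)) * ((2:ℝ)^(j*(d-1)) / (1 + 2^j * ρ y)^d) := by
          rw [pow_succ]
          field_simp
  -- integrability
  have hiA : Integrable (A j x) μ := by
    refine Integrable.mono' (integrable_const (c 0 * 2^(j*(d-1))))
      ((hAm j).aestronglyMeasurable) (ae_of_all _ fun y => ?_)
    have h := hloc 0 j y
    simpa using h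
  have hiAf : Integrable (fun y => A j x y * f y) μ := by
    refine Integrable.mono' (integrable_const (c 0 * 2^(j*(d-1)) * Mf))
      (((hAm j).mul hfm).aestronglyMeasurable) (ae_of_all _ fun y => ?_)
    have h := hloc 0 j y
    simp only [pow_zero, div_one] at h
    rw [Real.norm_eq_abs, abs_mul]
    exact mul_le_mul h (hfb y) (abs_nonneg _) (le_trans (abs_nonneg _) h)
  -- rewrite the bias as a single integral
  have heq : (∫ y, A j x y * f y ∂μ) - f x = ∫ y, A j x y * (f y - f x) ∂μ := by
    have e : (fun y => A j x y * (f y - f x)) =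
        fun y => A j x y * f y - A j x y * f x := funext fun y => by ring
    rw [e, integral_sub hiAf (hiA.mul_const (f x)), integral_mul_const, hA1 j, one_mul]
  rw [heq]
  have hb : |∫ y, A j x y * (f y - f x) ∂μ| ≤
      (∫⁻ y, ENNReal.ofReal ‖A j x y * (f y - f x)‖ ∂μ).toReal := by
    simpa [Real.norm_eq_abs] using
      norm_integral_le_lintegral_norm (μ := μ) (fun y => A j x y * (f y - f x))
  refine le_trans hb ?_
  have h2t : (0:ℝ) < (2:ℝ)^(-(j:ℝ)*t) := Real.rpow_pos_of_pos (by norm_num) _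
  apply ENNReal.toReal_le_of_le_ofReal (by positivity)
  calc (∫⁻ y, ENNReal.ofReal ‖A j x y * (f y - f x)‖ ∂μ)
      ≤ ∫⁻ y, ENNReal.ofReal ((M' * c (d+1) * (2:ℝ)^(-(j:ℝ)*t)) *
          ((2:ℝ)^(j*(d-1)) / (1 + 2^j * ρ y)^d)) ∂μ := by
        apply lintegral_mono
        intro y
        apply ENNReal.ofReal_le_ofReal
        rw [Real.norm_eq_abs]
        exact hpt y
    _ = ENNReal.ofReal (M' * c (d+1) * (2:ℝ)^(-(j:ℝ)*t)) *
          ∫⁻ y, ENNReal.ofReal ((2:ℝ)^(j*(d-1)) / (1 + 2^j * ρ y)^d) ∂μ := by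
        rw [← lintegral_const_mul' _ _ ENNReal.ofReal_ne_top]
        congr 1
        funext y
        rw [← ENNReal.ofReal_mul (by positivity)]
    _ ≤ ENNReal.ofReal (M' * c (d+1) * (2:ℝ)^(-(j:ℝ)*t)) * ENNReal.ofReal K := by
        gcongr
        exact hKb j
    _ ≤ ENNReal.ofReal (M' * c (d+1) * K * (2:ℝ)^(-(j:ℝ)*t)) := by
        rw [← ENNReal.ofReal_mul (by positivity)]
        apply ENNReal.ofReal_le_ofReal
        ring_nf
        exact le_refl _
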